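/- (Completeness of Dom_w.) Let Ω = (a,b) be a bounded open interval, w : Ω → ℝ nonnegative and locally integrable, finitely degenerate with I = ⋃_{i=1}^N (a_i,b_i) (N < ∞) the union of the pairwise disjoint open intervals on which 1/w is locally essentially bounded; assume w has a representative that is locally absolutely continuous on each (a_i,b_i) with locally integrable derivative, and let ŵ be the auxiliary weight associated with w. Let Dom_w be the set of (a.e.-equivalence classes of) functions u that are locally absolutely continuous on each (a_i,b_i) and satisfy ‖u‖ := ∫_I |u| ŵ dx + ∫_I |u'| w dx < ∞. Then Dom_w is complete for this norm: every sequence (u_k) in Dom_w with ∫_I |u_k − u_l| ŵ dx + ∫_I |u_k' − u_l'| w dx → 0 as k,l → ∞ admits a limit u ∈ Dom_w with ∫_I |u_k − u| ŵ dx + ∫_I |u_k' − u'| w dx → 0. -/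

import Mathlib

open MeasureTheory Set Filter Topology
open scoped ENNReal

/-- The essential supremum of `1/w` over `E`, with respect to Lebesgue measure,
valued in `[0,+∞]`.  The convention `(+∞)⁻¹ = 0` is built into `ℝ≥0∞`. -/
noncomputable def essSupInv (w : ℝ → ℝ) (E : Set ℝ) : ℝ≥0∞ :=
  essSup (fun y => ENNReal.ofReal (1 / w y)) (MeasureTheory.volume.restrict E)

/-- `u` is absolutely continuous on `[c,d]` with a.e. derivative `u'`:
`u'` is integrable on `[c,d]` and `u` is the indefinite integral of `u'` there. -/
def ACOn (u u' : ℝ → ℝ) (c d : ℝ) : Prop :=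
  IntervalIntegrable u' MeasureTheory.volume c d ∧
    ∀ x ∈ Set.Icc c d, u x = u c + ∫ t in c..x, u' t

/-- `u` is locally absolutely continuous on `(α,β)` with a.e. derivative `u'`:
it is absolutely continuous on every compact subinterval. -/
def LocACOn (u u' : ℝ → ℝ) (α β : ℝ) : Prop :=
  ∀ c d : ℝ, α < c → c ≤ d → d < β → ACOn u u' c d

/-- The auxiliary weight `ŵ` associated with `w` on the interval `(α,β)`;
at the endpoints `α`, `β` this expression gives the one-sided limit values. -/
noncomputable def hatW (w : ℝ → ℝ) (α β : ℝ) (x : ℝ) : ℝ :=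
  if x ≤ (3*α+β)/4 then ((essSupInv w (Set.Ioo x ((α+β)/2)))⁻¹).toReal
  else if x ≤ (α+3*β)/4 then
    ((essSupInv w (Set.Ioo ((3*α+β)/4) ((α+3*β)/4)))⁻¹).toReal
  else ((essSupInv w (Set.Ioo ((α+β)/2) x))⁻¹).toReal

open Classical in
/-- The auxiliary weight associated with a family of pairwise disjoint open intervals
`(A i, B i)`, extended by `0` off the closure of their union (on each closed interval
`[A i, B i]` it is given by `hatW`, whose values at the endpoints are the one-sided
limit values). -/
noncomputable def hatWFam (w : ℝ → ℝ) {ι : Type*} (A B : ι → ℝ) (x : ℝ) : ℝ :=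
  if h : ∃ i, x ∈ Set.Icc (A i) (B i) then hatW w (A h.choose) (B h.choose) x else 0


namespace Stmt18Helpers

open scoped Classical

lemma essSupInv_mono (w : ℝ → ℝ) {E F : Set ℝ} (h : E ⊆ F) :
    essSupInv w E ≤ essSupInv w F :=
  essSup_mono_measure' (Measure.restrict_mono h le_rfl)

lemma ennreal_le_inv_mul {a b c : ℝ≥0∞} (hc0 : c ≠ 0) (hct : c ≠ ⊤) (h : a * c ≤ b) :
    a ≤ c⁻¹ * b := by
  rw [← one_mul a, ← ENNReal.inv_mul_cancel hc0 hct, mul_assoc]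
  exact mul_le_mul_right (by rwa [mul_comm]) c⁻¹

lemma w_dichot (w : ℝ → ℝ) (hw0 : ∀ x, 0 ≤ w x) {E : Set ℝ} (hE : essSupInv w E < ⊤) :
    ∃ δ : ℝ, 0 < δ ∧ ∀ᵐ x ∂(volume.restrict E), w x = 0 ∨ δ ≤ w x := by
  set C : ℝ := (essSupInv w E).toReal + 1 with hCdef
  have hC0 : 0 < C := by positivity
  refine ⟨1/C, by positivity, ?_⟩
  have h1 : ∀ᵐ x ∂(volume.restrict E), ENNReal.ofReal (1 / w x) ≤ essSupInv w E :=
    ae_le_essSup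
  filter_upwards [h1] with x hx
  rcases eq_or_lt_of_le (hw0 x) with h0 | hpos
  · exact Or.inl h0.symm
  · right
    have hlt : ENNReal.ofReal (1 / w x) < ENNReal.ofReal C := by
      refine lt_of_le_of_lt hx ?_
      conv_lhs => rw [← ENNReal.ofReal_toReal hE.ne]
      exact (ENNReal.ofReal_lt_ofReal_iff hC0).2 (by rw [hCdef]; linarith)
    have h2 : 1 / w x < C := by
      by_contra hcon
      exact absurd hlt (not_lt.2 (ENNReal.ofReal_le_ofReal (not_lt.1 hcon)))
    have h3 : 1 < C * w x := by
      have := (div_lt_iff₀ hpos).1 h2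
      linarith [mul_comm C (w x)]
    rw [div_le_iff₀ hC0]
    nlinarith

lemma ACOn.continuousOn {u u' : ℝ → ℝ} {c d : ℝ} (hcd : c ≤ d) (h : ACOn u u' c d) :
    ContinuousOn u (Set.Icc c d) := by
  have h1 : IntegrableOn u' (Set.uIcc c d) volume := by
    rw [Set.uIcc_of_le hcd]
    exact (intervalIntegrable_iff_integrableOn_Icc_of_le hcd).1 h.1
  have h2 := intervalIntegral.continuousOn_primitive_interval h1
  rw [Set.uIcc_of_le hcd] at h2
  exact (continuousOn_const.add h2).congr fun x hx => h.2 x hx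

lemma LocACOn.continuousOn {α β : ℝ} {f g : ℝ → ℝ} (h : LocACOn f g α β) :
    ContinuousOn f (Set.Ioo α β) := by
  intro x hx
  obtain ⟨hx1, hx2⟩ := hx
  have hc1 : α < (α + x)/2 := by linarith
  have hc2 : (α + x)/2 < x := by linarith
  have hd1 : x < (x + β)/2 := by linarith
  have hd2 : (x + β)/2 < β := by linarith
  have hAC := h ((α + x)/2) ((x + β)/2) hc1 (by linarith) hd2
  have hcont := ACOn.continuousOn (by linarith) hAC
  have : ContinuousAt f x :=
    hcont.continuousAt (Icc_mem_nhds hc2 hd1)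
  exact this.continuousWithinAt

lemma LocACOn.intervalIntegrable {α β : ℝ} {f g : ℝ → ℝ} (h : LocACOn f g α β)
    {x y : ℝ} (hx : x ∈ Set.Ioo α β) (hy : y ∈ Set.Ioo α β) :
    IntervalIntegrable g volume x y := by
  have h1 : α < min x y := lt_min hx.1 hy.1
  have h2 : max x y < β := max_lt hx.2 hy.2
  have := (h (min x y) (max x y) h1 (min_le_max) h2).1
  exact this.mono_set (by rw [Set.uIcc_of_le min_le_max]; exact Set.uIcc_subset_Icc ⟨min_le_left _ _, le_max_left _ _⟩ ⟨min_le_right _ _, le_max_right _ _⟩)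

lemma LocACOn.eq_add_integral {α β : ℝ} {f g : ℝ → ℝ} (h : LocACOn f g α β)
    {p x : ℝ} (hp : p ∈ Set.Ioo α β) (hx : x ∈ Set.Ioo α β) :
    f x = f p + ∫ t in p..x, g t := by
  have h1 : α < min p x := lt_min hp.1 hx.1
  have h2 : max p x < β := max_lt hp.2 hx.2
  obtain ⟨hII, hrep⟩ := h (min p x) (max p x) h1 min_le_max h2
  have hxm : x ∈ Set.Icc (min p x) (max p x) := ⟨min_le_right _ _, le_max_right _ _⟩
  have hpm : p ∈ Set.Icc (min p x) (max p x) := ⟨min_le_left _ _, le_max_left _ _⟩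
  have e1 := hrep x hxm
  have e2 := hrep p hpm
  have hIIx : IntervalIntegrable g volume (min p x) x := by
    refine hII.mono_set ?_
    rw [Set.uIcc_of_le min_le_max, Set.uIcc_of_le (min_le_right p x)]
    exact Set.Icc_subset_Icc le_rfl (le_max_right p x)
  have hIIp : IntervalIntegrable g volume (min p x) p := by
    refine hII.mono_set ?_
    rw [Set.uIcc_of_le min_le_max, Set.uIcc_of_le (min_le_left p x)]
    exact Set.Icc_subset_Icc le_rfl (le_max_left p x)
  have e3 := intervalIntegral.integral_interval_sub_left hIIx hIIp
  rw [e1, e2]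
  rw [← e3]
  ring

end Stmt18Helpers

namespace Stmt18Helpers

lemma wt_lower {w wt : ℝ → ℝ} (hw0 : ∀ x, 0 ≤ w x) {c d : ℝ} (hcd : c < d)
    (hwt : ∀ᵐ x ∂(volume.restrict (Set.Icc c d)), wt x = w x)
    (hcont : ContinuousOn wt (Set.Icc c d))
    (hE : essSupInv w (Set.Icc c d) < ⊤) :
    ∃ δ : ℝ, 0 < δ ∧ ∀ x ∈ Set.Icc c d, wt x ≤ 0 ∨ δ ≤ wt x := by
  obtain ⟨δ, hδ, hae⟩ := w_dichot w hw0 hE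
  refine ⟨δ, hδ, ?_⟩
  by_contra hcon
  push_neg at hcon
  obtain ⟨x, hxmem, hx1, hx2⟩ := hcon
  have hx1' : 0 < wt x := hx1
  -- the set where wt ∈ (0, δ) is a relative neighborhood of x
  have hmem : wt ⁻¹' (Set.Ioo 0 δ) ∈ 𝓝[Set.Icc c d] x :=
    hcont x hxmem (isOpen_Ioo.mem_nhds ⟨hx1', hx2⟩)
  rw [mem_nhdsWithin] at hmem
  obtain ⟨O, hOopen, hxO, hOsub⟩ := hmem
  obtain ⟨η, hη, hball⟩ := Metric.isOpen_iff.1 hOopen x hxO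
  set g1 := max c (x - η) with hg1
  set g2 := min d (x + η) with hg2
  have hg : g1 < g2 := by
    rw [hg1, hg2]
    rcases hxmem with ⟨hxc, hxd⟩
    rw [max_lt_iff]
    constructor
    · rw [lt_min_iff]; exact ⟨hcd, by linarith⟩
    · rw [lt_min_iff]; exact ⟨by linarith, by linarith⟩
  have hsub2 : Set.Ioo g1 g2 ⊆ {y | 0 < wt y ∧ wt y < δ} ∩ Set.Icc c d := by
    intro y hy
    have hyIcc : y ∈ Set.Icc c d := by
      constructor
      · exact le_of_lt (lt_of_le_of_lt (le_max_left _ _) hy.1)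
      · exact le_of_lt (lt_of_lt_of_le hy.2 (min_le_left _ _))
    have hyO : y ∈ O := by
      apply hball
      rw [Metric.mem_ball, Real.dist_eq, abs_lt]
      constructor
      · have := lt_of_le_of_lt (le_max_right c (x - η)) hy.1; linarith
      · have := lt_of_lt_of_le hy.2 (min_le_right d (x + η)); linarith
    have := hOsub ⟨hyO, hyIcc⟩
    exact ⟨this, hyIcc⟩
  -- but that set is null
  have hnull : ∀ᵐ y ∂(volume.restrict (Set.Icc c d)), ¬ (0 < wt y ∧ wt y < δ) := by
    filter_upwards [hwt, hae] with y h1 h2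
    rintro ⟨h3, h4⟩
    rw [h1] at h3 h4
    rcases h2 with h5 | h5
    · rw [h5] at h3; exact lt_irrefl _ h3
    · linarith
  rw [ae_iff] at hnull
  simp only [not_not] at hnull
  rw [Measure.restrict_apply' measurableSet_Icc] at hnull
  have hle : volume (Set.Ioo g1 g2) ≤ 0 := by
    rw [← hnull]
    exact measure_mono hsub2
  rw [Real.volume_Ioo] at hle
  have : ENNReal.ofReal (g2 - g1) = 0 := le_antisymm hle zero_le
  rw [ENNReal.ofReal_eq_zero] at this
  linarith

lemma wt_lower' {w wt : ℝ → ℝ} (hw0 : ∀ x, 0 ≤ w x) {c d : ℝ} (hcd : c < d)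
    (hwt : ∀ᵐ x ∂(volume.restrict (Set.Icc c d)), wt x = w x)
    (hcont : ContinuousOn wt (Set.Icc c d))
    (hE : essSupInv w (Set.Icc c d) < ⊤)
    {x0 : ℝ} (hx0 : x0 ∈ Set.Icc c d) (h0 : 0 < wt x0) :
    ∃ δ : ℝ, 0 < δ ∧ ∀ x ∈ Set.Icc c d, δ ≤ wt x := by
  obtain ⟨δ, hδ, h⟩ := wt_lower hw0 hcd hwt hcont hE
  refine ⟨δ, hδ, fun x hx => ?_⟩
  rcases h x hx with h1 | h1
  · exfalso
    have h2 : δ ≤ wt x0 := by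
      rcases h x0 hx0 with h3 | h3
      · linarith
      · exact h3
    have hsub : Set.uIcc x x0 ⊆ Set.Icc c d := Set.uIcc_subset_Icc hx hx0
    have hIVT := intermediate_value_uIcc (hcont.mono hsub)
    have hmem : δ/2 ∈ Set.uIcc (wt x) (wt x0) := by
      rw [Set.mem_uIcc]
      left
      exact ⟨by linarith, by linarith⟩
    obtain ⟨y, hy, hwy⟩ := hIVT hmem
    rcases h y (hsub hy) with h3 | h3 <;> rw [hwy] at h3 <;> linarith
  · exact h1

lemma wt_pos_all {α β : ℝ} {w wt wd : ℝ → ℝ} (hw0 : ∀ x, 0 ≤ w x)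
    (hwt : ∀ᵐ x ∂(volume.restrict (Set.Ioo α β)), wt x = w x)
    (hAC : LocACOn wt wd α β)
    (hwinv : ∀ c d : ℝ, α < c → c ≤ d → d < β → essSupInv w (Set.Icc c d) < ⊤)
    {x0 : ℝ} (hx0 : x0 ∈ Set.Ioo α β) (h0 : 0 < wt x0) :
    ∀ x ∈ Set.Ioo α β, 0 < wt x := by
  intro x hx
  by_contra hneg
  push_neg at hneg
  set c := (α + min x x0)/2 with hc
  set d := (max x x0 + β)/2 with hd
  have h1 : α < min x x0 := lt_min hx.1 hx0.1
  have h2 : max x x0 < β := max_lt hx.2 hx0.2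
  have hαc : α < c := by rw [hc]; linarith
  have hcx : c < min x x0 := by rw [hc]; linarith
  have hxd : max x x0 < d := by rw [hd]; linarith
  have hdβ : d < β := by rw [hd]; linarith
  have hcd : c < d := lt_trans (lt_of_lt_of_le hcx min_le_max) hxd
  have hsub : Set.Icc c d ⊆ Set.Ioo α β := fun y hy => ⟨lt_of_lt_of_le hαc hy.1, lt_of_le_of_lt hy.2 hdβ⟩
  have hwt' : ∀ᵐ y ∂(volume.restrict (Set.Icc c d)), wt y = w y :=
    ae_restrict_of_ae_restrict_of_subset hsub hwt
  have hcont : ContinuousOn wt (Set.Icc c d) :=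
    ACOn.continuousOn (le_of_lt hcd) (hAC c d hαc (le_of_lt hcd) hdβ)
  have hxmem : x ∈ Set.Icc c d :=
    ⟨le_of_lt (lt_of_lt_of_le hcx (min_le_left _ _)), le_of_lt (lt_of_le_of_lt (le_max_left _ _) hxd)⟩
  have hx0mem : x0 ∈ Set.Icc c d :=
    ⟨le_of_lt (lt_of_lt_of_le hcx (min_le_right _ _)), le_of_lt (lt_of_le_of_lt (le_max_right _ _) hxd)⟩
  obtain ⟨δ, hδ, hlow⟩ := wt_lower' hw0 hcd hwt' hcont (hwinv c d hαc (le_of_lt hcd) hdβ) hx0mem h0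
  have := hlow x hxmem
  linarith

lemma essSupInv_pos {α β : ℝ} {w wt wd : ℝ → ℝ} (hw0 : ∀ x, 0 ≤ w x)
    (hwt : ∀ᵐ x ∂(volume.restrict (Set.Ioo α β)), wt x = w x)
    (hAC : LocACOn wt wd α β)
    (hwinv : ∀ c d : ℝ, α < c → c ≤ d → d < β → essSupInv w (Set.Icc c d) < ⊤)
    (hpos : ∀ x ∈ Set.Ioo α β, 0 < wt x)
    {s t : ℝ} (hs : α < s) (hst : s < t) (ht : t < β) :
    0 < essSupInv w (Set.Ioo s t) := by
  rcases (zero_le : 0 ≤ essSupInv w (Set.Ioo s t)).lt_or_eq with h | h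
  · exact h
  exfalso
  have h0 : essSupInv w (Set.Ioo s t) = 0 := h.symm
  have hae : ∀ᵐ y ∂(volume.restrict (Set.Ioo s t)), ENNReal.ofReal (1 / w y) = 0 := by
    have h1 : ∀ᵐ y ∂(volume.restrict (Set.Ioo s t)),
        ENNReal.ofReal (1 / w y) ≤ essSupInv w (Set.Ioo s t) := ae_le_essSup
    filter_upwards [h1] with y hy
    rw [h0] at hy
    exact le_antisymm hy zero_le
  have hw00 : ∀ᵐ y ∂(volume.restrict (Set.Ioo s t)), w y = 0 := by
    filter_upwards [hae] with y hy
    rcases eq_or_lt_of_le (hw0 y) with h1 | h1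
    · exact h1.symm
    · exfalso
      rw [ENNReal.ofReal_eq_zero] at hy
      have := one_div_pos.2 h1
      linarith
  set s' := (2*s + t)/3 with hs'
  set t' := (s + 2*t)/3 with ht'
  have hss' : s < s' := by rw [hs']; linarith
  have hs't' : s' < t' := by rw [hs', ht']; linarith
  have ht't : t' < t := by rw [ht']; linarith
  have hsubIoo : Set.Icc s' t' ⊆ Set.Ioo s t :=
    fun y hy => ⟨lt_of_lt_of_le hss' hy.1, lt_of_le_of_lt hy.2 ht't⟩
  have hsubαβ : Set.Icc s' t' ⊆ Set.Ioo α β :=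
    fun y hy => ⟨lt_trans hs (hsubIoo hy).1, lt_trans (hsubIoo hy).2 ht⟩
  have hm' : (s+t)/2 ∈ Set.Icc s' t' := by
    constructor
    · rw [hs']; linarith
    · rw [ht']; linarith
  have hαs' : α < s' := lt_trans hs hss'
  have ht'β : t' < β := lt_trans ht't ht
  have hwt' : ∀ᵐ y ∂(volume.restrict (Set.Icc s' t')), wt y = w y :=
    ae_restrict_of_ae_restrict_of_subset hsubαβ hwt
  have hcont : ContinuousOn wt (Set.Icc s' t') :=
    ACOn.continuousOn (le_of_lt hs't') (hAC s' t' hαs' (le_of_lt hs't') ht'β)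
  have hm'pos : 0 < wt ((s+t)/2) := hpos _ (hsubαβ hm')
  obtain ⟨δ, hδ, hlow⟩ := wt_lower' hw0 hs't' hwt' hcont
    (hwinv s' t' hαs' (le_of_lt hs't') ht'β) hm' hm'pos
  have hw00' : ∀ᵐ y ∂(volume.restrict (Set.Icc s' t')), w y = 0 :=
    ae_restrict_of_ae_restrict_of_subset hsubIoo hw00
  have hFalse : ∀ᵐ y ∂(volume.restrict (Set.Icc s' t')), False := by
    filter_upwards [hw00', hwt', ae_restrict_mem measurableSet_Icc] with y h1 h2 hy
    have h3 := hlow y hy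
    rw [h2] at h3
    linarith
  rw [ae_iff] at hFalse
  simp only [not_false_iff, Set.setOf_true] at hFalse
  rw [Measure.restrict_apply' measurableSet_Icc, Set.univ_inter, Real.volume_Icc] at hFalse
  rw [ENNReal.ofReal_eq_zero] at hFalse
  linarith

end Stmt18Helpers

namespace Stmt18Helpers

lemma ae_restrict_iUnion {s : ℕ → Set ℝ} (hms : ∀ p, MeasurableSet (s p)) {P : ℝ → Prop}
    (h : ∀ p, ∀ᵐ x ∂(volume.restrict (s p)), P x) :
    ∀ᵐ x ∂(volume.restrict (⋃ p, s p)), P x := by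
  rw [ae_iff, Measure.restrict_apply' (MeasurableSet.iUnion hms), Set.inter_iUnion]
  refine measure_iUnion_null fun p => ?_
  have := ae_iff.1 (h p)
  rwa [Measure.restrict_apply' (hms p)] at this

lemma hatW_lower {α β : ℝ} {w wt wd : ℝ → ℝ} (hw0 : ∀ x, 0 ≤ w x)
    (hwt : ∀ᵐ x ∂(volume.restrict (Set.Ioo α β)), wt x = w x)
    (hAC : LocACOn wt wd α β)
    (hwinv : ∀ c d : ℝ, α < c → c ≤ d → d < β → essSupInv w (Set.Icc c d) < ⊤)
    (hpos : ∀ x ∈ Set.Ioo α β, 0 < wt x)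
    {c d : ℝ} (hc : α < c) (hm1 : c < (α+β)/2) (hm2 : (α+β)/2 < d) (hd : d < β) :
    ∃ ρ : ℝ, 0 < ρ ∧ ∀ x ∈ Set.Icc c d, ρ ≤ hatW w α β x := by
  have hαβ : α < β := by linarith
  set C := (essSupInv w (Set.Icc c ((α+β)/2)) ⊔ essSupInv w (Set.Icc ((α+β)/2) d)) ⊔
      essSupInv w (Set.Icc ((3*α+β)/4) ((α+3*β)/4)) with hCdef
  have hCfin : C < ⊤ := by
    rw [hCdef]
    refine sup_lt_iff.2 ⟨sup_lt_iff.2 ⟨?_, ?_⟩, ?_⟩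
    · exact hwinv c ((α+β)/2) hc (le_of_lt hm1) (by linarith)
    · exact hwinv ((α+β)/2) d (by linarith) (le_of_lt hm2) hd
    · exact hwinv ((3*α+β)/4) ((α+3*β)/4) (by linarith) (by linarith) (by linarith)
  have hCpos : 0 < C := by
    refine lt_of_lt_of_le
      (essSupInv_pos hw0 hwt hAC hwinv hpos (by linarith : α < (3*α+β)/4)
        (by linarith : (3*α+β)/4 < (α+3*β)/4) (by linarith : (α+3*β)/4 < β)) ?_
    exact le_trans (essSupInv_mono w Set.Ioo_subset_Icc_self) le_sup_right
  have key : ∀ E : Set ℝ, essSupInv w E ≤ C → 0 < essSupInv w E →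
      (C⁻¹).toReal ≤ ((essSupInv w E)⁻¹).toReal := by
    intro E h1 h2
    exact (ENNReal.toReal_le_toReal (ENNReal.inv_ne_top.2 hCpos.ne')
      (ENNReal.inv_ne_top.2 h2.ne')).2 (ENNReal.inv_le_inv' h1)
  refine ⟨(C⁻¹).toReal,
    ENNReal.toReal_pos (ENNReal.inv_ne_zero.2 hCfin.ne) (ENNReal.inv_ne_top.2 hCpos.ne'), ?_⟩
  intro x hx
  unfold hatW
  split_ifs with h1 h2
  · -- x ≤ (3α+β)/4
    refine key _ ?_ ?_
    · refine le_trans (essSupInv_mono w ?_) (le_sup_of_le_left le_sup_left)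
      exact fun y hy => ⟨le_trans hx.1 (le_of_lt hy.1), le_of_lt hy.2⟩
    · exact essSupInv_pos hw0 hwt hAC hwinv hpos (lt_of_lt_of_le hc hx.1)
        (lt_of_le_of_lt h1 (by linarith)) (by linarith)
  · -- middle
    refine key _ ?_ ?_
    · exact le_trans (essSupInv_mono w Set.Ioo_subset_Icc_self) le_sup_right
    · exact essSupInv_pos hw0 hwt hAC hwinv hpos (by linarith) (by linarith) (by linarith)
  · -- right branch
    push_neg at h1 h2
    refine key _ ?_ ?_
    · refine le_trans (essSupInv_mono w ?_) (le_sup_of_le_left le_sup_right)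
      exact fun y hy => ⟨le_of_lt hy.1, le_trans (le_of_lt hy.2) hx.2⟩
    · exact essSupInv_pos hw0 hwt hAC hwinv hpos (by linarith)
        (lt_trans (by linarith : (α+β)/2 < (α+3*β)/4) h2) (lt_of_le_of_lt hx.2 hd)

lemma hatW_zero {α β : ℝ} {w : ℝ → ℝ} (hαβ : α < β)
    (hw00 : ∀ᵐ y ∂(volume.restrict (Set.Ioo α β)), w y = 0) :
    ∀ x ∈ Set.Ioo α β, hatW w α β x = 0 := by
  have key : ∀ E : Set ℝ, E ⊆ Set.Ioo α β → essSupInv w E = 0 := by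
    intro E hE
    have h1 : ∀ᵐ y ∂(volume.restrict E), w y = 0 :=
      ae_restrict_of_ae_restrict_of_subset hE hw00
    refine le_antisymm (essSup_le_of_ae_le 0 ?_) zero_le
    filter_upwards [h1] with y hy
    simp [hy]
  intro x hx
  unfold hatW
  split_ifs with h1 h2
  · rw [key _ (fun y hy => ⟨lt_trans hx.1 hy.1, lt_of_lt_of_le (lt_of_lt_of_le hy.2 le_rfl) (by linarith)⟩)]
    simp
  · rw [key _ (fun y hy => ⟨lt_of_le_of_lt (by linarith : α ≤ (3*α+β)/4) hy.1, lt_of_lt_of_le hy.2 (by linarith)⟩)]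
    simp
  · rw [key _ (fun y hy => ⟨lt_of_le_of_lt (by linarith : α ≤ (α+β)/2) hy.1, lt_trans hy.2 hx.2⟩)]
    simp

lemma hatW_measurable (w : ℝ → ℝ) (α β : ℝ) : Measurable (hatW w α β) := by
  have h1 : Measurable fun x : ℝ => ((essSupInv w (Set.Ioo x ((α+β)/2)))⁻¹).toReal := by
    have hanti : Antitone fun x : ℝ => essSupInv w (Set.Ioo x ((α+β)/2)) :=
      fun x y hxy => essSupInv_mono w (Set.Ioo_subset_Ioo_left hxy)
    exact ENNReal.measurable_toReal.comp hanti.measurable.inv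
  have h3 : Measurable fun x : ℝ => ((essSupInv w (Set.Ioo ((α+β)/2) x))⁻¹).toReal := by
    have hmono : Monotone fun x : ℝ => essSupInv w (Set.Ioo ((α+β)/2) x) :=
      fun x y hxy => essSupInv_mono w (Set.Ioo_subset_Ioo_right hxy)
    exact ENNReal.measurable_toReal.comp hmono.measurable.inv
  unfold hatW
  exact Measurable.ite measurableSet_Iic h1 (Measurable.ite measurableSet_Iic measurable_const h3)

lemma hatWFam_ae_eq {N : ℕ} (w : ℝ → ℝ) (A B : Fin N → ℝ)
    (hdisj : Pairwise fun i j => Disjoint (Set.Ioo (A i) (B i)) (Set.Ioo (A j) (B j)))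
    (i : Fin N) :
    ∀ᵐ x ∂(volume.restrict (Set.Ioo (A i) (B i))),
      hatWFam w A B x = hatW w (A i) (B i) x := by
  have hnull : volume (⋃ j, ({A j} ∪ {B j} : Set ℝ)) = 0 :=
    measure_iUnion_null fun j =>
      measure_union_null Real.volume_singleton Real.volume_singleton
  have h1 : ∀ᵐ x ∂(volume.restrict (Set.Ioo (A i) (B i))),
      x ∉ ⋃ j, ({A j} ∪ {B j} : Set ℝ) := by
    refine ae_restrict_of_ae ?_
    rw [ae_iff]
    simpa only [not_not, Set.setOf_mem_eq] using hnull
  filter_upwards [h1, ae_restrict_mem measurableSet_Ioo] with x hxF hxi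
  have hex : ∃ j, x ∈ Set.Icc (A j) (B j) := ⟨i, Set.Ioo_subset_Icc_self hxi⟩
  rw [hatWFam, dif_pos hex]
  have hj := hex.choose_spec
  have hji : hex.choose = i := by
    by_contra hne
    have hxj : x ∈ Set.Ioo (A hex.choose) (B hex.choose) := by
      rcases eq_or_lt_of_le hj.1 with h | h
      · exact absurd (Set.mem_iUnion.2 ⟨hex.choose,
          Or.inl (by rw [Set.mem_singleton_iff]; exact h.symm)⟩) hxF
      rcases eq_or_lt_of_le hj.2 with h' | h'
      · exact absurd (Set.mem_iUnion.2 ⟨hex.choose,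
          Or.inr (by rw [Set.mem_singleton_iff]; exact h')⟩) hxF
      exact ⟨h, h'⟩
    exact Set.disjoint_left.1 (hdisj hne) hxj hxi
  rw [hji]

end Stmt18Helpers

namespace Stmt18Helpers

lemma exists_exhaustion {α β : ℝ} (hαβ : α < β) :
    ∃ cc dd : ℕ → ℝ, Antitone cc ∧ Monotone dd ∧
      (∀ p, α < cc p ∧ cc p < (α+β)/2 ∧ (α+β)/2 < dd p ∧ dd p < β) ∧
      (∀ x ∈ Set.Ioo α β, ∃ p, x ∈ Set.Icc (cc p) (dd p)) := by
  have hpos : ∀ p : ℕ, 0 < (β-α)/((p:ℝ)+3) := by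
    intro p
    apply div_pos (by linarith)
    positivity
  have hle : ∀ p : ℕ, (β-α)/((p:ℝ)+3) ≤ (β-α)/3 := by
    intro p
    apply div_le_div_of_nonneg_left (by linarith) (by norm_num)
    have : (0:ℝ) ≤ p := Nat.cast_nonneg p
    linarith
  refine ⟨fun p => α + (β-α)/((p:ℝ)+3), fun p => β - (β-α)/((p:ℝ)+3), ?_, ?_, ?_, ?_⟩
  · intro p q hpq
    have h1 : (β-α)/((q:ℝ)+3) ≤ (β-α)/((p:ℝ)+3) := by
      apply div_le_div_of_nonneg_left (by linarith) (by positivity)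
      have : (p:ℝ) ≤ q := Nat.cast_le.2 hpq
      linarith
    simp only
    linarith
  · intro p q hpq
    have h1 : (β-α)/((q:ℝ)+3) ≤ (β-α)/((p:ℝ)+3) := by
      apply div_le_div_of_nonneg_left (by linarith) (by positivity)
      have : (p:ℝ) ≤ q := Nat.cast_le.2 hpq
      linarith
    simp only
    linarith
  · intro p
    have h1 := hpos p
    have h2 := hle p
    refine ⟨by linarith, by linarith, by linarith, by linarith⟩
  · intro x hx
    obtain ⟨n0, hn0⟩ := exists_nat_gt ((β-α)/(x-α))
    obtain ⟨n1, hn1⟩ := exists_nat_gt ((β-α)/(β-x))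
    have hxα : 0 < x - α := by linarith [hx.1]
    have hβx : 0 < β - x := by linarith [hx.2]
    refine ⟨n0 + n1, ?_, ?_⟩
    · have h1 : (β-α)/(x-α) < ((n0+n1:ℕ):ℝ) + 3 := by
        push_cast
        have : (0:ℝ) ≤ n1 := Nat.cast_nonneg n1
        linarith
      have h2 : (β - α) < (((n0+n1:ℕ):ℝ)+3) * (x - α) := by
        have := (div_lt_iff₀ hxα).1 h1
        linarith
      have h3 : (β-α)/(((n0+n1:ℕ):ℝ)+3) < x - α := by
        rw [div_lt_iff₀ (by positivity)]
        nlinarith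
      simp only
      linarith
    · have h1 : (β-α)/(β-x) < ((n0+n1:ℕ):ℝ) + 3 := by
        push_cast
        have : (0:ℝ) ≤ n0 := Nat.cast_nonneg n0
        linarith
      have h2 : (β - α) < (((n0+n1:ℕ):ℝ)+3) * (β - x) := by
        have := (div_lt_iff₀ hβx).1 h1
        linarith
      have h3 : (β-α)/(((n0+n1:ℕ):ℝ)+3) < β - x := by
        rw [div_lt_iff₀ (by positivity)]
        nlinarith
      simp only
      linarith

end Stmt18Helpers

namespace Stmt18Helpers

lemma key {α β : ℝ} (hαβ : α < β) {w wt wd : ℝ → ℝ} (hw0 : ∀ x, 0 ≤ w x)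
    (hwmeas : Measurable w)
    (hwt : ∀ᵐ x ∂(volume.restrict (Set.Ioo α β)), wt x = w x)
    (hwAC : LocACOn wt wd α β)
    (hwinv : ∀ c d : ℝ, α < c → c ≤ d → d < β → essSupInv w (Set.Icc c d) < ⊤)
    {u g : ℕ → ℝ → ℝ}
    (hAC : ∀ k, LocACOn (u k) (g k) α β)
    {hW : ℝ → ℝ} (hhW0 : ∀ x, 0 ≤ hW x)
    (hhWae : ∀ᵐ x ∂(volume.restrict (Set.Ioo α β)), hW x = hatW w α β x)
    (hfin : ∀ k, (∫⁻ x in Set.Ioo α β, ENNReal.ofReal (|u k x| * hW x)) +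
      (∫⁻ x in Set.Ioo α β, ENNReal.ofReal (|g k x| * w x)) < ⊤)
    (hC : ∀ ε : ℝ, 0 < ε → ∃ M : ℕ, ∀ k l : ℕ, M ≤ k → M ≤ l →
      (∫⁻ x in Set.Ioo α β, ENNReal.ofReal (|u k x - u l x| * hW x)) +
      (∫⁻ x in Set.Ioo α β, ENNReal.ofReal (|g k x - g l x| * w x)) ≤ ENNReal.ofReal ε) :
    ∃ v v' : ℝ → ℝ, LocACOn v v' α β ∧
      (∫⁻ x in Set.Ioo α β, ENNReal.ofReal (|v x| * hW x)) +
      (∫⁻ x in Set.Ioo α β, ENNReal.ofReal (|v' x| * w x)) < ⊤ ∧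
      ∀ ε : ℝ, 0 < ε → ∃ M : ℕ, ∀ k, M ≤ k →
        (∫⁻ x in Set.Ioo α β, ENNReal.ofReal (|u k x - v x| * hW x)) +
        (∫⁻ x in Set.Ioo α β, ENNReal.ofReal (|g k x - v' x| * w x)) ≤ ENNReal.ofReal ε := by
  classical
  by_cases hgood : 0 < wt ((α+β)/2)
  case neg =>
    -- degenerate interval : w vanishes a.e., both weights vanish
    have hmmem : (α+β)/2 ∈ Set.Ioo α β := ⟨by linarith, by linarith⟩
    have hw00 : ∀ᵐ x ∂(volume.restrict (Set.Ioo α β)), w x = 0 := by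
      filter_upwards [hwt, ae_restrict_mem measurableSet_Ioo] with x h1 h2
      by_contra hne
      have hxpos : 0 < wt x := by
        rw [h1]
        exact lt_of_le_of_ne (hw0 x) (Ne.symm hne)
      exact hgood (wt_pos_all hw0 hwt hwAC hwinv h2 hxpos _ hmmem)
    have hhW00 : ∀ᵐ x ∂(volume.restrict (Set.Ioo α β)), hW x = 0 := by
      filter_upwards [hhWae, ae_restrict_mem measurableSet_Ioo] with x h1 h2
      rw [h1]
      exact hatW_zero hαβ hw00 x h2
    have hz1 : ∀ f : ℝ → ℝ,
        (∫⁻ x in Set.Ioo α β, ENNReal.ofReal (|f x| * hW x)) = 0 := by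
      intro f
      rw [← lintegral_zero]
      refine lintegral_congr_ae ?_
      filter_upwards [hhW00] with x hx
      rw [hx, mul_zero, ENNReal.ofReal_zero]
    have hz2 : ∀ f : ℝ → ℝ,
        (∫⁻ x in Set.Ioo α β, ENNReal.ofReal (|f x| * w x)) = 0 := by
      intro f
      rw [← lintegral_zero]
      refine lintegral_congr_ae ?_
      filter_upwards [hw00] with x hx
      rw [hx, mul_zero, ENNReal.ofReal_zero]
    refine ⟨fun _ => 0, fun _ => 0, ?_, ?_, ?_⟩
    · intro c d hc hcd hd
      refine ⟨intervalIntegrable_const, fun x hx => by simp⟩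
    · rw [hz1, hz2]
      simp
    · intro ε hε
      refine ⟨0, fun k _ => ?_⟩
      rw [hz1 (fun x => u k x - 0), hz2 (fun x => g k x - 0)]
      simp
  case pos =>
  have hmmem : (α+β)/2 ∈ Set.Ioo α β := ⟨by linarith, by linarith⟩
  have hpos : ∀ x ∈ Set.Ioo α β, 0 < wt x := wt_pos_all hw0 hwt hwAC hwinv hmmem hgood
  obtain ⟨cc, dd, hccanti, hddmono, hccdd, hexh⟩ := exists_exhaustion hαβ
  have hIccSub : ∀ p, Set.Icc (cc p) (dd p) ⊆ Set.Ioo α β := fun p y hy =>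
    ⟨lt_of_lt_of_le (hccdd p).1 hy.1, lt_of_le_of_lt hy.2 (hccdd p).2.2.2⟩
  have hSeq : Set.Ioo α β = ⋃ p, Set.Icc (cc p) (dd p) :=
    Set.Subset.antisymm (fun x hx => Set.mem_iUnion.2 (hexh x hx))
      (Set.iUnion_subset hIccSub)
  have hccdd' : ∀ p, cc p < dd p := fun p => by
    obtain ⟨h1, h2, h3, h4⟩ := hccdd p; linarith
  -- lower bounds for w and hW on the compact pieces
  have hδ : ∀ p, ∃ δ : ℝ, 0 < δ ∧
      ∀ᵐ x ∂(volume.restrict (Set.Icc (cc p) (dd p))), δ ≤ w x := by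
    intro p
    obtain ⟨h1, h2, h3, h4⟩ := hccdd p
    have hcd := hccdd' p
    have hwt' : ∀ᵐ x ∂(volume.restrict (Set.Icc (cc p) (dd p))), wt x = w x :=
      ae_restrict_of_ae_restrict_of_subset (hIccSub p) hwt
    have hcont := ACOn.continuousOn (le_of_lt hcd) (hwAC _ _ h1 (le_of_lt hcd) h4)
    obtain ⟨δ, hδ0, hlow⟩ := wt_lower' hw0 hcd hwt' hcont
      (hwinv _ _ h1 (le_of_lt hcd) h4) (x0 := (α+β)/2)
      ⟨le_of_lt h2, le_of_lt h3⟩ (hpos _ hmmem)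
    refine ⟨δ, hδ0, ?_⟩
    filter_upwards [hwt', ae_restrict_mem measurableSet_Icc] with x e1 e2
    rw [← e1]
    exact hlow x e2
  choose δf hδf0 hδfw using hδ
  have hρ : ∀ p, ∃ ρ : ℝ, 0 < ρ ∧ ∀ x ∈ Set.Icc (cc p) (dd p), ρ ≤ hatW w α β x := by
    intro p
    obtain ⟨h1, h2, h3, h4⟩ := hccdd p
    exact hatW_lower hw0 hwt hwAC hwinv hpos h1 h2 h3 h4
  choose ρf hρf0 hρf using hρ
  -- measurability facts
  have hum : ∀ k, AEMeasurable (u k) (volume.restrict (Set.Ioo α β)) := fun k =>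
    (LocACOn.continuousOn (hAC k)).aemeasurable measurableSet_Ioo
  have hgm : ∀ k, AEMeasurable (g k) (volume.restrict (Set.Ioo α β)) := by
    intro k
    rw [hSeq]
    refine aemeasurable_iUnion_iff.2 fun p => ?_
    have h1 := (hAC k _ _ (hccdd p).1 (le_of_lt (hccdd' p)) (hccdd p).2.2.2).1
    exact ((intervalIntegrable_iff_integrableOn_Icc_of_le
      (le_of_lt (hccdd' p))).1 h1).aemeasurable
  have hhWm : AEMeasurable hW (volume.restrict (Set.Ioo α β)) := by
    refine (hatW_measurable w α β).aemeasurable.congr ?_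
    filter_upwards [hhWae] with x hx
    exact hx.symm
  have hwm : AEMeasurable w (volume.restrict (Set.Ioo α β)) := hwmeas.aemeasurable
  have hprod : ∀ f q : ℝ → ℝ, AEMeasurable f (volume.restrict (Set.Ioo α β)) →
      AEMeasurable q (volume.restrict (Set.Ioo α β)) →
      AEMeasurable (fun x => ENNReal.ofReal (|f x| * q x))
        (volume.restrict (Set.Ioo α β)) := fun f q hf hq =>
    ENNReal.measurable_ofReal.comp_aemeasurable
      ((measurable_abs.comp_aemeasurable hf).mul hq)
  -- extraction of a rapidly Cauchy subsequence
  have hφex : ∃ φ : ℕ → ℕ, StrictMono φ ∧ ∀ n k l, φ n ≤ k → φ n ≤ l →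
      (∫⁻ x in Set.Ioo α β, ENNReal.ofReal (|u k x - u l x| * hW x)) +
      (∫⁻ x in Set.Ioo α β, ENNReal.ofReal (|g k x - g l x| * w x)) ≤
        ENNReal.ofReal ((1/2)^n) := by
    have hM : ∀ n : ℕ, ∃ M : ℕ, ∀ k l, M ≤ k → M ≤ l →
        (∫⁻ x in Set.Ioo α β, ENNReal.ofReal (|u k x - u l x| * hW x)) +
        (∫⁻ x in Set.Ioo α β, ENNReal.ofReal (|g k x - g l x| * w x)) ≤
          ENNReal.ofReal ((1/2)^n) :=
      fun n => hC _ (by positivity)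
    choose M hMspec using hM
    refine ⟨fun n => Nat.rec (M 0) (fun n ih => max (ih + 1) (M (n+1))) n, ?_, ?_⟩
    · apply strictMono_nat_of_lt_succ
      intro n
      exact lt_of_lt_of_le (Nat.lt_succ_self _) (le_max_left _ _)
    · intro n k l hk hl
      have hge : M n ≤ Nat.rec (M 0) (fun n ih => max (ih + 1) (M (n+1))) n := by
        cases n with
        | zero => exact le_rfl
        | succ n => exact le_max_right _ _
      exact hMspec n k l (le_trans hge hk) (le_trans hge hl)
  obtain ⟨φ, hφmono, hφ⟩ := hφex
  have hφn : ∀ n : ℕ,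
      (∫⁻ x in Set.Ioo α β, ENNReal.ofReal (|u (φ (n+1)) x - u (φ n) x| * hW x)) +
      (∫⁻ x in Set.Ioo α β, ENNReal.ofReal (|g (φ (n+1)) x - g (φ n) x| * w x)) ≤
        ENNReal.ofReal ((1/2)^n) :=
    fun n => hφ n (φ (n+1)) (φ n) (le_of_lt (hφmono (Nat.lt_succ_self n))) le_rfl
  -- generic L¹ bounds on the compacts
  have hgL1 : ∀ (p : ℕ) (f : ℝ → ℝ),
      (∫⁻ x in Set.Icc (cc p) (dd p), ENNReal.ofReal |f x|) ≤
        (ENNReal.ofReal (δf p))⁻¹ *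
          (∫⁻ x in Set.Ioo α β, ENNReal.ofReal (|f x| * w x)) := by
    intro p f
    have h1 : ∀ᵐ x ∂(volume.restrict (Set.Icc (cc p) (dd p))),
        ENNReal.ofReal |f x| ≤
          (ENNReal.ofReal (δf p))⁻¹ * ENNReal.ofReal (|f x| * w x) := by
      filter_upwards [hδfw p] with x hx
      refine ennreal_le_inv_mul (ENNReal.ofReal_pos.2 (hδf0 p)).ne' ENNReal.ofReal_ne_top ?_
      rw [← ENNReal.ofReal_mul (abs_nonneg _)]
      exact ENNReal.ofReal_le_ofReal (mul_le_mul_of_nonneg_left hx (abs_nonneg _))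
    calc (∫⁻ x in Set.Icc (cc p) (dd p), ENNReal.ofReal |f x|)
        ≤ ∫⁻ x in Set.Icc (cc p) (dd p),
            (ENNReal.ofReal (δf p))⁻¹ * ENNReal.ofReal (|f x| * w x) :=
          lintegral_mono_ae h1
      _ = (ENNReal.ofReal (δf p))⁻¹ *
            ∫⁻ x in Set.Icc (cc p) (dd p), ENNReal.ofReal (|f x| * w x) :=
          lintegral_const_mul' _ _
            (ENNReal.inv_ne_top.2 (ENNReal.ofReal_pos.2 (hδf0 p)).ne')
      _ ≤ _ := mul_le_mul_right
          (lintegral_mono' (Measure.restrict_mono (hIccSub p) le_rfl) le_rfl) _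
  have huL1 : ∀ (p : ℕ) (f : ℝ → ℝ),
      (∫⁻ x in Set.Icc (cc p) (dd p), ENNReal.ofReal |f x|) ≤
        (ENNReal.ofReal (ρf p))⁻¹ *
          (∫⁻ x in Set.Ioo α β, ENNReal.ofReal (|f x| * hW x)) := by
    intro p f
    have h1 : ∀ᵐ x ∂(volume.restrict (Set.Icc (cc p) (dd p))),
        ENNReal.ofReal |f x| ≤
          (ENNReal.ofReal (ρf p))⁻¹ * ENNReal.ofReal (|f x| * hW x) := by
      have hWae' : ∀ᵐ x ∂(volume.restrict (Set.Icc (cc p) (dd p))), hW x = hatW w α β x :=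
        ae_restrict_of_ae_restrict_of_subset (hIccSub p) hhWae
      filter_upwards [hWae', ae_restrict_mem measurableSet_Icc] with x hx1 hx2
      refine ennreal_le_inv_mul (ENNReal.ofReal_pos.2 (hρf0 p)).ne' ENNReal.ofReal_ne_top ?_
      rw [← ENNReal.ofReal_mul (abs_nonneg _)]
      refine ENNReal.ofReal_le_ofReal (mul_le_mul_of_nonneg_left ?_ (abs_nonneg _))
      rw [hx1]
      exact hρf p x hx2
    calc (∫⁻ x in Set.Icc (cc p) (dd p), ENNReal.ofReal |f x|)
        ≤ ∫⁻ x in Set.Icc (cc p) (dd p),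
            (ENNReal.ofReal (ρf p))⁻¹ * ENNReal.ofReal (|f x| * hW x) :=
          lintegral_mono_ae h1
      _ = (ENNReal.ofReal (ρf p))⁻¹ *
            ∫⁻ x in Set.Icc (cc p) (dd p), ENNReal.ofReal (|f x| * hW x) :=
          lintegral_const_mul' _ _
            (ENNReal.inv_ne_top.2 (ENNReal.ofReal_pos.2 (hρf0 p)).ne')
      _ ≤ _ := mul_le_mul_right
          (lintegral_mono' (Measure.restrict_mono (hIccSub p) le_rfl) le_rfl) _
  -- geometric series bound
  have hhalf : (ENNReal.ofReal (1/2) : ℝ≥0∞) < 1 := ENNReal.ofReal_lt_one.2 (by norm_num)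
  have hgeom : ∀ cst : ℝ≥0∞, cst ≠ ⊤ →
      (∑' n : ℕ, cst * ENNReal.ofReal ((1/2:ℝ)^n)) ≠ ⊤ := by
    intro cst hcst
    rw [ENNReal.tsum_mul_left]
    have e1 : (∑' n : ℕ, ENNReal.ofReal ((1/2:ℝ)^n)) = ∑' n : ℕ, (ENNReal.ofReal (1/2))^n :=
      tsum_congr fun n => ENNReal.ofReal_pow (by norm_num) n
    rw [e1, ENNReal.tsum_geometric]
    refine ENNReal.mul_ne_top hcst (ENNReal.inv_ne_top.2 ?_)
    intro hzero
    rw [tsub_eq_zero_iff_le] at hzero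
    exact absurd hzero (not_le.2 hhalf)
  -- summability of consecutive differences
  have hsumg : ∀ p : ℕ, (∑' n : ℕ, ∫⁻ x in Set.Icc (cc p) (dd p),
      ENNReal.ofReal |g (φ (n+1)) x - g (φ n) x|) ≠ ⊤ := by
    intro p
    refine ne_top_of_le_ne_top (hgeom (ENNReal.ofReal (δf p))⁻¹
      (ENNReal.inv_ne_top.2 (ENNReal.ofReal_pos.2 (hδf0 p)).ne')) ?_
    refine ENNReal.tsum_le_tsum fun n => ?_
    refine le_trans (hgL1 p (fun x => g (φ (n+1)) x - g (φ n) x)) ?_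
    exact mul_le_mul_right (le_trans le_add_self (hφn n)) _
  have hsumu : ∀ p : ℕ, (∑' n : ℕ, ∫⁻ x in Set.Icc (cc p) (dd p),
      ENNReal.ofReal |u (φ (n+1)) x - u (φ n) x|) ≠ ⊤ := by
    intro p
    refine ne_top_of_le_ne_top (hgeom (ENNReal.ofReal (ρf p))⁻¹
      (ENNReal.inv_ne_top.2 (ENNReal.ofReal_pos.2 (hρf0 p)).ne')) ?_
    refine ENNReal.tsum_le_tsum fun n => ?_
    refine le_trans (huL1 p (fun x => u (φ (n+1)) x - u (φ n) x)) ?_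
    exact mul_le_mul_right (le_trans le_self_add (hφn n)) _
  -- measurability of differences on the compacts
  have hgdiffm : ∀ (p : ℕ) (F1 F2 : ℝ → ℝ),
      AEMeasurable F1 (volume.restrict (Set.Ioo α β)) →
      AEMeasurable F2 (volume.restrict (Set.Ioo α β)) →
      AEMeasurable (fun x => ENNReal.ofReal |F1 x - F2 x|)
        (volume.restrict (Set.Icc (cc p) (dd p))) := by
    intro p F1 F2 h1 h2
    have h3 : AEMeasurable (fun x => F1 x - F2 x)
        (volume.restrict (Set.Icc (cc p) (dd p))) :=
      (h1.sub h2).mono_measure (Measure.restrict_mono (hIccSub p) le_rfl)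
    exact ENNReal.measurable_ofReal.comp_aemeasurable (measurable_abs.comp_aemeasurable h3)
  -- a.e. pointwise convergence of the subsequences on each compact
  have haeconv_g : ∀ p : ℕ, ∀ᵐ x ∂(volume.restrict (Set.Icc (cc p) (dd p))),
      (∃ L : ℝ, Tendsto (fun n => g (φ n) x) atTop (𝓝 L)) ∧
        Summable (fun n => |g (φ (n+1)) x - g (φ n) x|) := by
    intro p
    have hlt : (∫⁻ x in Set.Icc (cc p) (dd p),
        ∑' n : ℕ, ENNReal.ofReal |g (φ (n+1)) x - g (φ n) x|) ≠ ⊤ := by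
      rw [lintegral_tsum (fun n => hgdiffm p _ _ (hgm _) (hgm _))]
      exact hsumg p
    have hae := ae_lt_top' (AEMeasurable.ennreal_tsum
      (fun n => hgdiffm p _ _ (hgm _) (hgm _))) hlt
    filter_upwards [hae] with x hx
    have hsummable : Summable (fun n => |g (φ (n+1)) x - g (φ n) x|) := by
      have h2 := ENNReal.summable_toReal hx.ne
      simpa only [ENNReal.toReal_ofReal (abs_nonneg _)] using h2
    refine ⟨?_, hsummable⟩
    have hcauchy : CauchySeq (fun n => g (φ n) x) := by
      apply cauchySeq_of_summable_dist
      simpa only [Real.dist_eq, abs_sub_comm] using hsummable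
    exact cauchySeq_tendsto_of_complete hcauchy
  have haeconv_u : ∀ p : ℕ, ∀ᵐ x ∂(volume.restrict (Set.Icc (cc p) (dd p))),
      ∃ L : ℝ, Tendsto (fun n => u (φ n) x) atTop (𝓝 L) := by
    intro p
    have hlt : (∫⁻ x in Set.Icc (cc p) (dd p),
        ∑' n : ℕ, ENNReal.ofReal |u (φ (n+1)) x - u (φ n) x|) ≠ ⊤ := by
      rw [lintegral_tsum (fun n => hgdiffm p _ _ (hum _) (hum _))]
      exact hsumu p
    have hae := ae_lt_top' (AEMeasurable.ennreal_tsum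
      (fun n => hgdiffm p _ _ (hum _) (hum _))) hlt
    filter_upwards [hae] with x hx
    have hsummable : Summable (fun n => |u (φ (n+1)) x - u (φ n) x|) := by
      have h2 := ENNReal.summable_toReal hx.ne
      simpa only [ENNReal.toReal_ofReal (abs_nonneg _)] using h2
    have hcauchy : CauchySeq (fun n => u (φ n) x) := by
      apply cauchySeq_of_summable_dist
      simpa only [Real.dist_eq, abs_sub_comm] using hsummable
    exact cauchySeq_tendsto_of_complete hcauchy
  -- the limit derivative
  set v' : ℝ → ℝ := fun x =>
    if h : ∃ L : ℝ, Tendsto (fun n => g (φ n) x) atTop (𝓝 L) then h.choose else 0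
    with hv'def
  have hv'tendsto : ∀ x, (∃ L : ℝ, Tendsto (fun n => g (φ n) x) atTop (𝓝 L)) →
      Tendsto (fun n => g (φ n) x) atTop (𝓝 (v' x)) := by
    intro x hx
    have he : v' x = hx.choose := by rw [hv'def]; exact dif_pos hx
    rw [he]
    exact hx.choose_spec
  -- a.e. convergence of the derivatives on the whole interval
  have haegS : ∀ᵐ x ∂(volume.restrict (Set.Ioo α β)),
      Tendsto (fun n => g (φ n) x) atTop (𝓝 (v' x)) := by
    rw [hSeq]
    refine ae_restrict_iUnion (fun p => measurableSet_Icc) fun p => ?_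
    filter_upwards [haeconv_g p] with x hx
    exact hv'tendsto x hx.1
  -- a base point where the functions converge
  have hexp0 : ∃ p0 : ℝ, p0 ∈ Set.Icc (cc 0) (dd 0) ∧
      ∃ L : ℝ, Tendsto (fun n => u (φ n) p0) atTop (𝓝 L) := by
    by_contra hcon
    push_neg at hcon
    have h2 : ∀ᵐ x ∂(volume.restrict (Set.Icc (cc 0) (dd 0))), False := by
      filter_upwards [haeconv_u 0, ae_restrict_mem measurableSet_Icc] with x hx1 hx2
      obtain ⟨L, hL⟩ := hx1
      exact hcon x hx2 L hL
    rw [ae_iff] at h2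
    simp only [not_false_iff, Set.setOf_true] at h2
    rw [Measure.restrict_apply' measurableSet_Icc, Set.univ_inter, Real.volume_Icc] at h2
    rw [ENNReal.ofReal_eq_zero] at h2
    have := hccdd' 0
    linarith
  obtain ⟨p0, hp0mem, L0, hL0⟩ := hexp0
  have hp0S : p0 ∈ Set.Ioo α β := hIccSub 0 hp0mem
  -- quantitative tail bound for the derivatives
  have htail : ∀ p n : ℕ,
      (∫⁻ x in Set.Icc (cc p) (dd p), ENNReal.ofReal |g (φ n) x - v' x|) ≤
        ∑' j : ℕ, ∫⁻ x in Set.Icc (cc p) (dd p),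
          ENNReal.ofReal |g (φ (j + n + 1)) x - g (φ (j + n)) x| := by
    intro p n
    have h1 : ∀ᵐ x ∂(volume.restrict (Set.Icc (cc p) (dd p))),
        ENNReal.ofReal |g (φ n) x - v' x| ≤
          ∑' j : ℕ, ENNReal.ofReal |g (φ (j + n + 1)) x - g (φ (j + n)) x| := by
      filter_upwards [haeconv_g p] with x hx
      obtain ⟨hex, hsum⟩ := hx
      have hv'x := hv'tendsto x hex
      have hdist := dist_le_tsum_of_dist_le_of_tendsto
        (f := fun m => g (φ m) x)
        (fun j => |g (φ (j+1)) x - g (φ j) x|)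
        (fun j => le_of_eq (by rw [Real.dist_eq, abs_sub_comm]))
        hsum hv'x n
      rw [Real.dist_eq] at hdist
      have hsum2 : Summable (fun j : ℕ => |g (φ (n + j + 1)) x - g (φ (n + j)) x|) :=
        hsum.comp_injective (add_right_injective n)
      calc ENNReal.ofReal |g (φ n) x - v' x|
          ≤ ENNReal.ofReal (∑' j : ℕ, |g (φ (n + j + 1)) x - g (φ (n + j)) x|) :=
            ENNReal.ofReal_le_ofReal hdist
        _ = ∑' j : ℕ, ENNReal.ofReal |g (φ (n + j + 1)) x - g (φ (n + j)) x| :=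
            ENNReal.ofReal_tsum_of_nonneg (fun j => abs_nonneg _) hsum2
        _ = ∑' j : ℕ, ENNReal.ofReal |g (φ (j + n + 1)) x - g (φ (j + n)) x| :=
            tsum_congr fun j => by rw [Nat.add_comm n j]
    calc (∫⁻ x in Set.Icc (cc p) (dd p), ENNReal.ofReal |g (φ n) x - v' x|)
        ≤ ∫⁻ x in Set.Icc (cc p) (dd p),
            ∑' j : ℕ, ENNReal.ofReal |g (φ (j + n + 1)) x - g (φ (j + n)) x| :=
          lintegral_mono_ae h1
      _ = _ := lintegral_tsum (fun j => hgdiffm p _ _ (hgm _) (hgm _))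
  -- L¹ convergence of the derivatives on each compact
  have htail0 : ∀ p : ℕ, Tendsto (fun n => ∫⁻ x in Set.Icc (cc p) (dd p),
      ENNReal.ofReal |g (φ n) x - v' x|) atTop (𝓝 0) := by
    intro p
    have h0 := ENNReal.tendsto_sum_nat_add
      (fun j => ∫⁻ x in Set.Icc (cc p) (dd p),
        ENNReal.ofReal |g (φ (j+1)) x - g (φ j) x|) (hsumg p)
    exact tendsto_of_tendsto_of_tendsto_of_le_of_le tendsto_const_nhds h0
      (fun n => zero_le) (fun n => htail p n)
  -- measurability of the limit derivative
  have hv'meas : AEMeasurable v' (volume.restrict (Set.Ioo α β)) := by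
    rw [hSeq]
    refine aemeasurable_iUnion_iff.2 fun p => ?_
    refine aemeasurable_of_tendsto_metrizable_ae' (f := fun n x => g (φ n) x)
      (fun n => (hgm (φ n)).mono_measure (Measure.restrict_mono (hIccSub p) le_rfl)) ?_
    filter_upwards [haeconv_g p] with x hx
    exact hv'tendsto x hx.1
  -- triangle inequality for the weighted seminorms
  have htri : ∀ f h q : ℝ → ℝ, (∀ x, 0 ≤ q x) →
      AEMeasurable (fun x => ENNReal.ofReal (|f x - h x| * q x))
        (volume.restrict (Set.Ioo α β)) →
      (∫⁻ x in Set.Ioo α β, ENNReal.ofReal (|f x| * q x)) ≤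
        (∫⁻ x in Set.Ioo α β, ENNReal.ofReal (|f x - h x| * q x)) +
        (∫⁻ x in Set.Ioo α β, ENNReal.ofReal (|h x| * q x)) := by
    intro f h q hq hmeas
    have h1 : ∀ x, ENNReal.ofReal (|f x| * q x) ≤
        ENNReal.ofReal (|f x - h x| * q x) + ENNReal.ofReal (|h x| * q x) := by
      intro x
      have habs : |f x| ≤ |f x - h x| + |h x| := by
        have := abs_add_le (f x - h x) (h x)
        simpa [sub_add_cancel] using this
      calc ENNReal.ofReal (|f x| * q x)
          ≤ ENNReal.ofReal (|f x - h x| * q x + |h x| * q x) := by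
            refine ENNReal.ofReal_le_ofReal ?_
            rw [← add_mul]
            exact mul_le_mul_of_nonneg_right habs (hq x)
        _ ≤ _ := ENNReal.ofReal_add_le
    calc (∫⁻ x in Set.Ioo α β, ENNReal.ofReal (|f x| * q x))
        ≤ ∫⁻ x in Set.Ioo α β,
            (ENNReal.ofReal (|f x - h x| * q x) + ENNReal.ofReal (|h x| * q x)) :=
          lintegral_mono h1
      _ = _ := lintegral_add_left' hmeas _
  -- uniform bound for the derivative seminorms along the subsequence
  have hBg : ∀ n, (∫⁻ x in Set.Ioo α β, ENNReal.ofReal (|g (φ n) x| * w x)) ≤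
      (∫⁻ x in Set.Ioo α β, ENNReal.ofReal (|g (φ 0) x| * w x)) + ENNReal.ofReal 1 := by
    intro n
    refine le_trans (htri (g (φ n)) (g (φ 0)) w hw0
      (hprod _ _ ((hgm _).sub (hgm _)) hwm)) ?_
    rw [add_comm]
    refine add_le_add_right ?_ _
    have h2 := hφ 0 (φ n) (φ 0) (hφmono.monotone (Nat.zero_le n)) le_rfl
    rw [pow_zero] at h2
    exact le_trans le_add_self h2
  -- integrability of v' on the compacts
  have hv'int : ∀ p, IntegrableOn v' (Set.Icc (cc p) (dd p)) volume := by
    intro p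
    have haet : ∀ᵐ x ∂(volume.restrict (Set.Icc (cc p) (dd p))),
        Tendsto (fun n => ENNReal.ofReal |g (φ n) x|) atTop
          (𝓝 (ENNReal.ofReal |v' x|)) := by
      filter_upwards [haeconv_g p] with x hx
      exact (ENNReal.continuous_ofReal.tendsto _).comp
        ((continuous_abs.tendsto _).comp (hv'tendsto x hx.1))
    have h1 : (∫⁻ x in Set.Icc (cc p) (dd p), ENNReal.ofReal |v' x|) ≤
        liminf (fun n => ∫⁻ x in Set.Icc (cc p) (dd p),
          ENNReal.ofReal |g (φ n) x|) atTop := by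
      have e1 : (∫⁻ x in Set.Icc (cc p) (dd p), ENNReal.ofReal |v' x|) =
          ∫⁻ x in Set.Icc (cc p) (dd p),
            liminf (fun n => ENNReal.ofReal |g (φ n) x|) atTop := by
        refine lintegral_congr_ae ?_
        filter_upwards [haet] with x hx
        rw [hx.liminf_eq]
      rw [e1]
      refine lintegral_liminf_le' fun n => ?_
      exact ENNReal.measurable_ofReal.comp_aemeasurable
        (measurable_abs.comp_aemeasurable ((hgm (φ n)).mono_measure
          (Measure.restrict_mono (hIccSub p) le_rfl)))
    have h2 : ∀ n : ℕ, (∫⁻ x in Set.Icc (cc p) (dd p), ENNReal.ofReal |g (φ n) x|) ≤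
        (ENNReal.ofReal (δf p))⁻¹ *
          ((∫⁻ x in Set.Ioo α β, ENNReal.ofReal (|g (φ 0) x| * w x)) + ENNReal.ofReal 1) :=
      fun n => le_trans (hgL1 p (g (φ n))) (mul_le_mul_right (hBg n) _)
    have hne : (ENNReal.ofReal (δf p))⁻¹ *
        ((∫⁻ x in Set.Ioo α β, ENNReal.ofReal (|g (φ 0) x| * w x)) + ENNReal.ofReal 1) < ⊤ := by
      refine ENNReal.mul_lt_top ?_ ?_
      · exact lt_of_le_of_ne le_top (ENNReal.inv_ne_top.2 (ENNReal.ofReal_pos.2 (hδf0 p)).ne')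
      · refine ENNReal.add_lt_top.2 ⟨?_, ENNReal.ofReal_lt_top⟩
        exact lt_of_le_of_lt le_add_self (hfin (φ 0))
    have h3 : (∫⁻ x in Set.Icc (cc p) (dd p), ENNReal.ofReal |v' x|) < ⊤ := by
      refine lt_of_le_of_lt h1 (lt_of_le_of_lt ?_ hne)
      exact le_trans (liminf_le_liminf (Filter.Eventually.of_forall h2))
        (le_of_eq (Filter.liminf_const _))
    refine ⟨(hv'meas.mono_measure
      (Measure.restrict_mono (hIccSub p) le_rfl)).aestronglyMeasurable, ?_⟩
    rw [hasFiniteIntegral_iff_norm]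
    have e1 : ∀ x : ℝ, ENNReal.ofReal ‖v' x‖ = ENNReal.ofReal |v' x| := fun x => by
      rw [Real.norm_eq_abs]
    simpa only [e1] using h3
  -- interval integrability of v' between points of the interval
  have hcompSub : ∀ x y : ℝ, x ∈ Set.Ioo α β → y ∈ Set.Ioo α β →
      ∃ p, Set.uIcc x y ⊆ Set.Icc (cc p) (dd p) := by
    intro x y hx hy
    obtain ⟨p1, hp1⟩ := hexh x hx
    obtain ⟨p2, hp2⟩ := hexh y hy
    refine ⟨max p1 p2, Set.uIcc_subset_Icc ⟨?_, ?_⟩ ⟨?_, ?_⟩⟩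
    · exact le_trans (hccanti (le_max_left p1 p2)) hp1.1
    · exact le_trans hp1.2 (hddmono (le_max_left p1 p2))
    · exact le_trans (hccanti (le_max_right p1 p2)) hp2.1
    · exact le_trans hp2.2 (hddmono (le_max_right p1 p2))
  have hv'II : ∀ x y : ℝ, x ∈ Set.Ioo α β → y ∈ Set.Ioo α β →
      IntervalIntegrable v' volume x y := by
    intro x y hx hy
    obtain ⟨p, hp⟩ := hcompSub x y hx hy
    exact ((hv'int p).mono_set hp).intervalIntegrable
  -- the limit function
  set v : ℝ → ℝ := fun x =>
    if x ∈ Set.Ioo α β then L0 + ∫ t in p0..x, v' t else 0 with hvdef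
  have hvS : ∀ x ∈ Set.Ioo α β, v x = L0 + ∫ t in p0..x, v' t := by
    intro x hx
    rw [hvdef]
    exact if_pos hx
  have hLoc : LocACOn v v' α β := by
    intro c e hc hce he
    have hcS : c ∈ Set.Ioo α β := ⟨hc, lt_of_le_of_lt hce he⟩
    refine ⟨hv'II c e hcS ⟨lt_of_lt_of_le hc hce, he⟩, ?_⟩
    intro x hx
    have hxS : x ∈ Set.Ioo α β := ⟨lt_of_lt_of_le hc hx.1, lt_of_le_of_lt hx.2 he⟩
    rw [hvS x hxS, hvS c hcS]
    have h4 := intervalIntegral.integral_add_adjacent_intervals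
      (hv'II p0 c hp0S hcS) (hv'II c x hcS hxS)
    rw [← h4]
    ring
  -- everywhere convergence of the subsequence to v on the interval
  have hvconv : ∀ x ∈ Set.Ioo α β, Tendsto (fun n => u (φ n) x) atTop (𝓝 (v x)) := by
    intro x hx
    obtain ⟨p, hp⟩ := hcompSub p0 x hp0S hx
    have hIoc1 : Set.Ioc p0 x ⊆ Set.Icc (cc p) (dd p) := fun z hz =>
      hp ⟨le_trans inf_le_left (le_of_lt hz.1), le_trans hz.2 le_sup_right⟩
    have hIoc2 : Set.Ioc x p0 ⊆ Set.Icc (cc p) (dd p) := fun z hz =>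
      hp ⟨le_trans inf_le_right (le_of_lt hz.1), le_trans hz.2 le_sup_left⟩
    have hL1 : ∀ s : Set ℝ, s ⊆ Set.Icc (cc p) (dd p) →
        Tendsto (fun n => ∫ t in s, g (φ n) t) atTop (𝓝 (∫ t in s, v' t)) := by
      intro s hssub
      refine tendsto_integral_of_L1 _ ((hv'int p).mono_set hssub).aestronglyMeasurable ?_ ?_
      · refine Filter.Eventually.of_forall fun n => ?_
        have h1 : IntegrableOn (g (φ n)) (Set.Icc (cc p) (dd p)) volume :=
          (intervalIntegrable_iff_integrableOn_Icc_of_le (le_of_lt (hccdd' p))).1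
            ((hAC (φ n)) _ _ (hccdd p).1 (le_of_lt (hccdd' p)) (hccdd p).2.2.2).1
        exact h1.mono_set hssub
      · have hb : ∀ n, (∫⁻ t in s, (‖g (φ n) t - v' t‖₊ : ℝ≥0∞)) ≤
            ∫⁻ t in Set.Icc (cc p) (dd p), ENNReal.ofReal |g (φ n) t - v' t| := by
          intro n
          rw [show (fun t => (‖g (φ n) t - v' t‖₊ : ℝ≥0∞)) =
            fun t => ENNReal.ofReal |g (φ n) t - v' t| from
            funext fun t => Real.enorm_eq_ofReal_abs _]
          exact lintegral_mono' (Measure.restrict_mono hssub le_rfl) le_rfl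
        exact tendsto_of_tendsto_of_tendsto_of_le_of_le tendsto_const_nhds (htail0 p)
          (fun n => zero_le) hb
    have hrep : ∀ n, u (φ n) x = u (φ n) p0 +
        ((∫ t in Set.Ioc p0 x, g (φ n) t) - ∫ t in Set.Ioc x p0, g (φ n) t) := by
      intro n
      rw [LocACOn.eq_add_integral (hAC (φ n)) hp0S hx]
      rfl
    have hveq : v x = L0 + ((∫ t in Set.Ioc p0 x, v' t) - ∫ t in Set.Ioc x p0, v' t) := by
      rw [hvS x hx]
      rfl
    rw [hveq]
    have hfinal := hL0.add ((hL1 _ hIoc1).sub (hL1 _ hIoc2))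
    refine hfinal.congr fun n => ?_
    exact (hrep n).symm
  have hvmeas : AEMeasurable v (volume.restrict (Set.Ioo α β)) := by
    refine aemeasurable_of_tendsto_metrizable_ae' (f := fun n x => u (φ n) x)
      (fun n => hum (φ n)) ?_
    filter_upwards [ae_restrict_mem measurableSet_Ioo] with x hx
    exact hvconv x hx
  -- Fatou for the two parts of the norm
  have hfatou_u : ∀ k, (∫⁻ x in Set.Ioo α β, ENNReal.ofReal (|u k x - v x| * hW x)) ≤
      liminf (fun n => ∫⁻ x in Set.Ioo α β,
        ENNReal.ofReal (|u k x - u (φ n) x| * hW x)) atTop := by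
    intro k
    have e1 : (∫⁻ x in Set.Ioo α β, ENNReal.ofReal (|u k x - v x| * hW x)) =
        ∫⁻ x in Set.Ioo α β,
          liminf (fun n => ENNReal.ofReal (|u k x - u (φ n) x| * hW x)) atTop := by
      refine lintegral_congr_ae ?_
      filter_upwards [ae_restrict_mem measurableSet_Ioo] with x hx
      have ht : Tendsto (fun n => ENNReal.ofReal (|u k x - u (φ n) x| * hW x)) atTop
          (𝓝 (ENNReal.ofReal (|u k x - v x| * hW x))) := by
        refine (ENNReal.continuous_ofReal.tendsto _).comp ?_
        exact ((tendsto_const_nhds.sub (hvconv x hx)).abs).mul_const _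
      exact ht.liminf_eq.symm
    rw [e1]
    exact lintegral_liminf_le' fun n => hprod _ _ ((hum k).sub (hum (φ n))) hhWm
  have hfatou_g : ∀ k, (∫⁻ x in Set.Ioo α β, ENNReal.ofReal (|g k x - v' x| * w x)) ≤
      liminf (fun n => ∫⁻ x in Set.Ioo α β,
        ENNReal.ofReal (|g k x - g (φ n) x| * w x)) atTop := by
    intro k
    have e1 : (∫⁻ x in Set.Ioo α β, ENNReal.ofReal (|g k x - v' x| * w x)) =
        ∫⁻ x in Set.Ioo α β,
          liminf (fun n => ENNReal.ofReal (|g k x - g (φ n) x| * w x)) atTop := by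
      refine lintegral_congr_ae ?_
      filter_upwards [haegS] with x hx
      have ht : Tendsto (fun n => ENNReal.ofReal (|g k x - g (φ n) x| * w x)) atTop
          (𝓝 (ENNReal.ofReal (|g k x - v' x| * w x))) := by
        refine (ENNReal.continuous_ofReal.tendsto _).comp ?_
        exact ((tendsto_const_nhds.sub hx).abs).mul_const _
      exact ht.liminf_eq.symm
    rw [e1]
    exact lintegral_liminf_le' fun n => hprod _ _ ((hgm k).sub (hgm (φ n))) hwm
  -- quantitative convergence bound
  have hlim : ∀ (ε : ℝ) (M : ℕ), (∀ k l, M ≤ k → M ≤ l →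
      (∫⁻ x in Set.Ioo α β, ENNReal.ofReal (|u k x - u l x| * hW x)) +
      (∫⁻ x in Set.Ioo α β, ENNReal.ofReal (|g k x - g l x| * w x)) ≤ ENNReal.ofReal ε) →
      ∀ k, M ≤ k →
      (∫⁻ x in Set.Ioo α β, ENNReal.ofReal (|u k x - v x| * hW x)) +
      (∫⁻ x in Set.Ioo α β, ENNReal.ofReal (|g k x - v' x| * w x)) ≤
        ENNReal.ofReal ε + ENNReal.ofReal ε := by
    intro ε M hM k hk
    have hφge : ∀ n : ℕ, M ≤ n → M ≤ φ n := fun n hn => le_trans hn hφmono.le_apply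
    have hev1 : ∀ᶠ n in atTop,
        (∫⁻ x in Set.Ioo α β, ENNReal.ofReal (|u k x - u (φ n) x| * hW x)) ≤
          ENNReal.ofReal ε := by
      filter_upwards [eventually_ge_atTop M] with n hn
      exact le_trans le_self_add (hM k (φ n) hk (hφge n hn))
    have hev2 : ∀ᶠ n in atTop,
        (∫⁻ x in Set.Ioo α β, ENNReal.ofReal (|g k x - g (φ n) x| * w x)) ≤
          ENNReal.ofReal ε := by
      filter_upwards [eventually_ge_atTop M] with n hn
      exact le_trans le_add_self (hM k (φ n) hk (hφge n hn))
    have h1 := le_trans (hfatou_u k)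
      (le_trans (liminf_le_liminf hev1) (le_of_eq (Filter.liminf_const _)))
    have h2 := le_trans (hfatou_g k)
      (le_trans (liminf_le_liminf hev2) (le_of_eq (Filter.liminf_const _)))
    exact add_le_add h1 h2
  refine ⟨v, v', hLoc, ?_, ?_⟩
  · -- finiteness of the norm of the limit
    obtain ⟨M1, hM1⟩ := hC 1 one_pos
    have h0 := hlim 1 M1 hM1 M1 le_rfl
    have h1 : (∫⁻ x in Set.Ioo α β, ENNReal.ofReal (|v x| * hW x)) < ⊤ := by
      refine lt_of_le_of_lt (htri v (u M1) hW hhW0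
        (hprod _ _ (hvmeas.sub (hum M1)) hhWm)) ?_
      refine ENNReal.add_lt_top.2 ⟨?_, ?_⟩
      · have e2 : (∫⁻ x in Set.Ioo α β, ENNReal.ofReal (|v x - u M1 x| * hW x)) =
            ∫⁻ x in Set.Ioo α β, ENNReal.ofReal (|u M1 x - v x| * hW x) := by
          refine lintegral_congr fun x => ?_
          rw [abs_sub_comm]
        rw [e2]
        calc (∫⁻ x in Set.Ioo α β, ENNReal.ofReal (|u M1 x - v x| * hW x))
            ≤ ENNReal.ofReal 1 + ENNReal.ofReal 1 := le_trans le_self_add h0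
          _ < ⊤ := by simp
      · exact lt_of_le_of_lt le_self_add (hfin M1)
    have h2 : (∫⁻ x in Set.Ioo α β, ENNReal.ofReal (|v' x| * w x)) < ⊤ := by
      refine lt_of_le_of_lt (htri v' (g M1) w hw0
        (hprod _ _ (hv'meas.sub (hgm M1)) hwm)) ?_
      refine ENNReal.add_lt_top.2 ⟨?_, ?_⟩
      · have e2 : (∫⁻ x in Set.Ioo α β, ENNReal.ofReal (|v' x - g M1 x| * w x)) =
            ∫⁻ x in Set.Ioo α β, ENNReal.ofReal (|g M1 x - v' x| * w x) := by
          refine lintegral_congr fun x => ?_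
          rw [abs_sub_comm]
        rw [e2]
        calc (∫⁻ x in Set.Ioo α β, ENNReal.ofReal (|g M1 x - v' x| * w x))
            ≤ ENNReal.ofReal 1 + ENNReal.ofReal 1 := le_trans le_add_self h0
          _ < ⊤ := by simp
      · exact lt_of_le_of_lt le_add_self (hfin M1)
    exact ENNReal.add_lt_top.2 ⟨h1, h2⟩
  · -- convergence in the norm
    intro ε hε
    obtain ⟨M, hM⟩ := hC (ε/2) (by linarith)
    refine ⟨M, fun k hk => ?_⟩
    refine le_trans (hlim (ε/2) M hM k hk) ?_
    rw [← ENNReal.ofReal_add (by linarith) (by linarith)]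
    exact ENNReal.ofReal_le_ofReal (by linarith)

end Stmt18Helpers

namespace Stmt18Helpers

lemma hatW_nonneg (w : ℝ → ℝ) (α β x : ℝ) : 0 ≤ hatW w α β x := by
  unfold hatW
  split_ifs <;> exact ENNReal.toReal_nonneg

lemma hatWFam_nonneg (w : ℝ → ℝ) {ι : Type*} (A B : ι → ℝ) (x : ℝ) :
    0 ≤ hatWFam w A B x := by
  unfold hatWFam
  split_ifs with h
  · exact hatW_nonneg _ _ _ _
  · exact le_rfl

end Stmt18Helpers


open Stmt18Helpers

/-- Completeness of `Dom_w`: every Cauchy sequence for the norm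
`‖u‖ = ∫_I |u| ŵ + ∫_I |u'| w` consisting of functions locally absolutely continuous
on each `(A i, B i)` with finite norm converges, in this norm, to a function of the
same kind. -/
theorem stmt_18 (a b : ℝ) (hab : a < b) (N : ℕ) (hN : 1 ≤ N)
    (A B : Fin N → ℝ) (hAB : ∀ i, A i < B i)
    (hsub : ∀ i, Set.Ioo (A i) (B i) ⊆ Set.Ioo a b)
    (hdisj : Pairwise fun i j => Disjoint (Set.Ioo (A i) (B i)) (Set.Ioo (A j) (B j)))
    (w : ℝ → ℝ) (hw0 : ∀ x, 0 ≤ w x) (hwmeas : Measurable w)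
    (hwloc : MeasureTheory.LocallyIntegrableOn w (Set.Ioo a b))
    (hwinv : ∀ i, ∀ c d : ℝ, A i < c → c ≤ d → d < B i → essSupInv w (Set.Icc c d) < ⊤)
    (wt wd : ℝ → ℝ)
    (hwt : ∀ᵐ x ∂(MeasureTheory.volume : MeasureTheory.Measure ℝ),
      x ∈ (⋃ i, Set.Ioo (A i) (B i)) → wt x = w x)
    (hwAC : ∀ i, LocACOn wt wd (A i) (B i))
    (u d : ℕ → ℝ → ℝ)
    (hAC : ∀ k i, LocACOn (u k) (d k) (A i) (B i))
    (hfin : ∀ k,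
      (∫⁻ x in ⋃ i, Set.Ioo (A i) (B i),
        ENNReal.ofReal (|u k x| * hatWFam w A B x)) +
      (∫⁻ x in ⋃ i, Set.Ioo (A i) (B i),
        ENNReal.ofReal (|d k x| * w x)) < ⊤)
    (hcauchy : ∀ ε : ℝ, 0 < ε → ∃ M : ℕ, ∀ k l : ℕ, M ≤ k → M ≤ l →
      (∫⁻ x in ⋃ i, Set.Ioo (A i) (B i),
        ENNReal.ofReal (|u k x - u l x| * hatWFam w A B x)) +
      (∫⁻ x in ⋃ i, Set.Ioo (A i) (B i),
        ENNReal.ofReal (|d k x - d l x| * w x)) ≤ ENNReal.ofReal ε) :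
    ∃ v v' : ℝ → ℝ,
      (∀ i, LocACOn v v' (A i) (B i)) ∧
      (∫⁻ x in ⋃ i, Set.Ioo (A i) (B i),
        ENNReal.ofReal (|v x| * hatWFam w A B x)) +
      (∫⁻ x in ⋃ i, Set.Ioo (A i) (B i),
        ENNReal.ofReal (|v' x| * w x)) < ⊤ ∧
      Filter.Tendsto (fun k =>
        (∫⁻ x in ⋃ i, Set.Ioo (A i) (B i),
          ENNReal.ofReal (|u k x - v x| * hatWFam w A B x)) +
        (∫⁻ x in ⋃ i, Set.Ioo (A i) (B i),
          ENNReal.ofReal (|d k x - v' x| * w x))) Filter.atTop (nhds 0) := by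
  classical
  -- restriction of each lintegral over the union to a single interval
  have hmono : ∀ (i : Fin N) (F : ℝ → ℝ≥0∞),
      (∫⁻ x in Set.Ioo (A i) (B i), F x) ≤ ∫⁻ x in ⋃ j, Set.Ioo (A j) (B j), F x :=
    fun i F => lintegral_mono'
      (Measure.restrict_mono (Set.subset_iUnion (fun j => Set.Ioo (A j) (B j)) i) le_rfl) le_rfl
  -- per-interval application of the key lemma
  have hkey : ∀ i : Fin N, ∃ v v' : ℝ → ℝ, LocACOn v v' (A i) (B i) ∧
      (∫⁻ x in Set.Ioo (A i) (B i), ENNReal.ofReal (|v x| * hatWFam w A B x)) +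
      (∫⁻ x in Set.Ioo (A i) (B i), ENNReal.ofReal (|v' x| * w x)) < ⊤ ∧
      ∀ ε : ℝ, 0 < ε → ∃ M : ℕ, ∀ k, M ≤ k →
        (∫⁻ x in Set.Ioo (A i) (B i),
          ENNReal.ofReal (|u k x - v x| * hatWFam w A B x)) +
        (∫⁻ x in Set.Ioo (A i) (B i),
          ENNReal.ofReal (|d k x - v' x| * w x)) ≤ ENNReal.ofReal ε := by
    intro i
    have hwt' : ∀ᵐ x ∂(volume.restrict (Set.Ioo (A i) (B i))), wt x = w x := by
      filter_upwards [ae_restrict_of_ae hwt, ae_restrict_mem measurableSet_Ioo] with x h1 h2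
      exact h1 (Set.mem_iUnion.2 ⟨i, h2⟩)
    refine key (hAB i) hw0 hwmeas hwt' (hwAC i) (hwinv i) (fun k => hAC k i)
      (hatWFam_nonneg w A B) (hatWFam_ae_eq w A B hdisj i) ?_ ?_
    · intro k
      exact lt_of_le_of_lt (add_le_add (hmono i _) (hmono i _)) (hfin k)
    · intro ε hε
      obtain ⟨M, hM⟩ := hcauchy ε hε
      exact ⟨M, fun k l hk hl =>
        le_trans (add_le_add (hmono i _) (hmono i _)) (hM k l hk hl)⟩
  choose vf vf' hLocf hfinf hconvf using hkey
  -- gluing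
  have huniq : ∀ (i : Fin N) (x : ℝ), x ∈ Set.Ioo (A i) (B i) →
      ∀ h : ∃ j, x ∈ Set.Ioo (A j) (B j), h.choose = i := by
    intro i x hx h
    by_contra hne
    exact Set.disjoint_left.1 (hdisj hne) h.choose_spec hx
  set v : ℝ → ℝ := fun x =>
    if h : ∃ j, x ∈ Set.Ioo (A j) (B j) then vf h.choose x else 0 with hvdef
  set v' : ℝ → ℝ := fun x =>
    if h : ∃ j, x ∈ Set.Ioo (A j) (B j) then vf' h.choose x else 0 with hv'def
  have hvi : ∀ (i : Fin N) (x : ℝ), x ∈ Set.Ioo (A i) (B i) →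
      v x = vf i x ∧ v' x = vf' i x := by
    intro i x hx
    have hex : ∃ j, x ∈ Set.Ioo (A j) (B j) := ⟨i, hx⟩
    constructor
    · have e1 : v x = vf hex.choose x := by rw [hvdef]; exact dif_pos hex
      rw [e1, huniq i x hx hex]
    · have e1 : v' x = vf' hex.choose x := by rw [hv'def]; exact dif_pos hex
      rw [e1, huniq i x hx hex]
  have hLoc : ∀ i, LocACOn v v' (A i) (B i) := by
    intro i c e hc hce he
    obtain ⟨hII, hrep⟩ := hLocf i c e hc hce he
    have hsubIoo : Set.Icc c e ⊆ Set.Ioo (A i) (B i) := fun y hy =>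
      ⟨lt_of_lt_of_le hc hy.1, lt_of_le_of_lt hy.2 he⟩
    have hEq : Set.EqOn (vf' i) v' (Set.Icc c e) := fun y hy =>
      ((hvi i y (hsubIoo hy)).2).symm
    constructor
    · have h2 : Set.EqOn (vf' i) v' (Set.uIoc c e) := fun y hy => by
        rw [Set.uIoc_of_le hce] at hy
        exact hEq (Set.Ioc_subset_Icc_self hy)
      rw [intervalIntegrable_iff] at hII ⊢
      exact hII.congr_fun h2 measurableSet_uIoc
    · intro x hx
      have hxI : x ∈ Set.Ioo (A i) (B i) := hsubIoo hx
      have hcI : c ∈ Set.Ioo (A i) (B i) := hsubIoo ⟨le_rfl, hce⟩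
      rw [(hvi i x hxI).1, (hvi i c hcI).1, hrep x hx]
      congr 1
      apply intervalIntegral.integral_congr
      intro y hy
      rw [Set.uIcc_of_le hx.1] at hy
      exact hEq ⟨hy.1, le_trans hy.2 hx.2⟩
  have hsplit : ∀ F : ℝ → ℝ≥0∞,
      (∫⁻ x in ⋃ j, Set.Ioo (A j) (B j), F x) =
        ∑ i : Fin N, ∫⁻ x in Set.Ioo (A i) (B i), F x := by
    intro F
    rw [Measure.restrict_iUnion hdisj (fun i => measurableSet_Ioo),
      lintegral_sum_measure, tsum_fintype]
  refine ⟨v, v', hLoc, ?_, ?_⟩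
  · have e : ∀ i : Fin N,
        (∫⁻ x in Set.Ioo (A i) (B i), ENNReal.ofReal (|v x| * hatWFam w A B x)) +
        (∫⁻ x in Set.Ioo (A i) (B i), ENNReal.ofReal (|v' x| * w x)) < ⊤ := by
      intro i
      have e1 : (∫⁻ x in Set.Ioo (A i) (B i),
          ENNReal.ofReal (|v x| * hatWFam w A B x)) =
          ∫⁻ x in Set.Ioo (A i) (B i), ENNReal.ofReal (|vf i x| * hatWFam w A B x) := by
        refine lintegral_congr_ae ?_
        filter_upwards [ae_restrict_mem measurableSet_Ioo] with x hx
        rw [(hvi i x hx).1]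
      have e2 : (∫⁻ x in Set.Ioo (A i) (B i), ENNReal.ofReal (|v' x| * w x)) =
          ∫⁻ x in Set.Ioo (A i) (B i), ENNReal.ofReal (|vf' i x| * w x) := by
        refine lintegral_congr_ae ?_
        filter_upwards [ae_restrict_mem measurableSet_Ioo] with x hx
        rw [(hvi i x hx).2]
      rw [e1, e2]
      exact hfinf i
    rw [hsplit, hsplit, ← Finset.sum_add_distrib]
    exact ENNReal.sum_lt_top.2 fun i _ => e i
  · have htendi : ∀ i : Fin N, Filter.Tendsto (fun k =>
        (∫⁻ x in Set.Ioo (A i) (B i),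
          ENNReal.ofReal (|u k x - v x| * hatWFam w A B x)) +
        (∫⁻ x in Set.Ioo (A i) (B i),
          ENNReal.ofReal (|d k x - v' x| * w x)))
        Filter.atTop (nhds 0) := by
      intro i
      rw [ENNReal.tendsto_atTop_zero]
      intro ε' hε'
      have hex : ∃ ε : ℝ, 0 < ε ∧ ENNReal.ofReal ε ≤ ε' := by
        rcases eq_or_ne ε' ⊤ with h | h
        · exact ⟨1, one_pos, by simp [h]⟩
        · exact ⟨ε'.toReal, ENNReal.toReal_pos hε'.ne' h,
            le_of_eq (ENNReal.ofReal_toReal h)⟩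
      obtain ⟨ε, hε, hle⟩ := hex
      obtain ⟨M, hM⟩ := hconvf i ε hε
      refine ⟨M, fun k hk => ?_⟩
      have e1 : (∫⁻ x in Set.Ioo (A i) (B i),
          ENNReal.ofReal (|u k x - v x| * hatWFam w A B x)) =
          ∫⁻ x in Set.Ioo (A i) (B i),
            ENNReal.ofReal (|u k x - vf i x| * hatWFam w A B x) := by
        refine lintegral_congr_ae ?_
        filter_upwards [ae_restrict_mem measurableSet_Ioo] with x hx
        rw [(hvi i x hx).1]
      have e2 : (∫⁻ x in Set.Ioo (A i) (B i),
          ENNReal.ofReal (|d k x - v' x| * w x)) =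
          ∫⁻ x in Set.Ioo (A i) (B i),
            ENNReal.ofReal (|d k x - vf' i x| * w x) := by
        refine lintegral_congr_ae ?_
        filter_upwards [ae_restrict_mem measurableSet_Ioo] with x hx
        rw [(hvi i x hx).2]
      rw [e1, e2]
      exact le_trans (hM k hk) hle
    have hsum := tendsto_finset_sum (Finset.univ : Finset (Fin N))
      (fun i _ => htendi i)
    have hzero : (∑ _i : Fin N, (0:ℝ≥0∞)) = 0 := by simp
    rw [hzero] at hsum
    refine hsum.congr fun k => ?_
    rw [hsplit, hsplit, ← Finset.sum_add_distrib]
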